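/- arXiv:1611.07127 — 2 statements merged into one kernel-verified Lean document; each statement's English description precedes it below -/
import Mathlib

section
/- Let G be a group acting on a type X, and let d be a natural number. Equip the d-th wreath product W = (Fin d → G) ⋊ Equiv.Perm (Fin d) (where a permutation τ acts on Fin d → G by permuting coordinates) with its natural action on Fin d → X given by ((g, τ) • x) i = g i • x (τ⁻¹ i). Then the orbit space of this action of W on Fin d → X is in bijection with Sym d Q, the type of multisets of cardinality d over the orbit space Q of the G-action on X. (This is the identification C^d/(G^d ⋊ S_d) ≅ Sym^d(C/G) underlying the first proof of Theorem 1(2).) -/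
/-- The homomorphism through which `Equiv.Perm (Fin d)` acts on the direct power `Fin d → G`
by permuting coordinates. -/
def permCoordAut (G : Type*) [Group G] (d : ℕ) : Equiv.Perm (Fin d) →* MulAut (Fin d → G) where
  toFun τ :=
    { toFun := fun g => fun i => g (τ⁻¹ i)
      invFun := fun g => fun i => g (τ i)
      left_inv := fun g => by funext i; simp
      right_inv := fun g => by funext i; simp
      map_mul' := fun g h => rfl }
  map_one' := by
    ext g i
    simp
  map_mul' σ τ := by
    ext g i
    simp

/-- The `d`-th wreath product `G ≀ S_d = (Fin d → G) ⋊ Equiv.Perm (Fin d)`. -/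
abbrev WreathProduct (G : Type*) [Group G] (d : ℕ) : Type _ :=
  SemidirectProduct (Fin d → G) (Equiv.Perm (Fin d)) (permCoordAut G d)

instance WreathProduct.instSMul (G X : Type*) [Group G] [MulAction G X] (d : ℕ) :
    SMul (WreathProduct G d) (Fin d → X) :=
  ⟨fun w x => fun i => w.left i • x (w.right⁻¹ i)⟩

/-- The natural action of the wreath product `(Fin d → G) ⋊ Equiv.Perm (Fin d)` on `Fin d → X`,
given by `((g, τ) • x) i = g i • x (τ⁻¹ i)`. -/
instance WreathProduct.instMulAction (G X : Type*) [Group G] [MulAction G X] (d : ℕ) :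
    MulAction (WreathProduct G d) (Fin d → X) where
  one_smul x := by
    funext i
    show (1 : WreathProduct G d).left i • x ((1 : WreathProduct G d).right⁻¹ i) = x i
    simp
  mul_smul a b x := by
    funext i
    show (a * b).left i • x ((a * b).right⁻¹ i)
        = a.left i • (b.left (a.right⁻¹ i) • x (b.right⁻¹ (a.right⁻¹ i)))
    simp [mul_smul, permCoordAut]


theorem perm_exists_equiv {α : Type*} : ∀ {l₁ l₂ : List α}, l₁.Perm l₂ →
    ∃ σ : Fin l₂.length ≃ Fin l₁.length, ∀ i, l₂.get i = l₁.get (σ i) := by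
  intro l₁ l₂ h
  induction h with
  | nil => exact ⟨Equiv.refl _, fun i => rfl⟩
  | cons a h ih =>
    obtain ⟨σ, hσ⟩ := ih
    refine ⟨(finSuccEquiv _).trans ((Equiv.optionCongr σ).trans (finSuccEquiv _).symm), ?_⟩
    intro i
    refine Fin.cases ?_ (fun j => ?_) i
    · rfl
    · simpa using hσ j
  | swap x y l =>
    refine ⟨Equiv.swap ⟨0, by simp⟩ ⟨1, by simp⟩, fun i => ?_⟩
    match i with
    | ⟨0, _⟩ => rfl
    | ⟨1, _⟩ => rfl
    | ⟨k+2, hk⟩ => simp [Equiv.swap_apply_def, Fin.ext_iff]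
  | trans h₁ h₂ ih₁ ih₂ =>
    obtain ⟨σ₁, hσ₁⟩ := ih₁
    obtain ⟨σ₂, hσ₂⟩ := ih₂
    exact ⟨σ₂.trans σ₁, fun i => by rw [hσ₂, hσ₁]; rfl⟩

theorem ofFn_perm_exists {α : Type*} {n : ℕ} {x y : Fin n → α}
    (h : (List.ofFn x).Perm (List.ofFn y)) : ∃ σ : Equiv.Perm (Fin n), x ∘ σ = y := by
  obtain ⟨σ, hσ⟩ := perm_exists_equiv h
  refine ⟨(finCongr (List.length_ofFn (f := y)).symm).trans
    (σ.trans (finCongr (List.length_ofFn (f := x)))), ?_⟩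
  funext i
  have := hσ (Fin.cast (List.length_ofFn (f := y)).symm i)
  simpa [List.get_ofFn, Fin.cast] using this.symm

theorem ofFn_get_cast {α : Type*} {d : ℕ} {l : List α} (h : l.length = d) :
    List.ofFn (fun i : Fin d => l.get (Fin.cast h.symm i)) = l := by
  subst h
  simp [List.ofFn_get]

/-- The orbit space of the natural action of the wreath product
`(Fin d → G) ⋊ Equiv.Perm (Fin d)` on `Fin d → X` is in bijection with `Sym d Q`, where `Q`
is the orbit space of the `G`-action on `X`. -/
theorem wreathProduct_orbitSpace_equiv_sym (G X : Type*) [Group G] [MulAction G X] (d : ℕ) :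
    Nonempty (Quotient (MulAction.orbitRel (WreathProduct G d) (Fin d → X)) ≃
      Sym (Quotient (MulAction.orbitRel G X)) d) := by
  classical
  set Q := Quotient (MulAction.orbitRel G X) with hQ
  let q : X → Q := Quotient.mk _
  let F : (Fin d → X) → Sym Q d :=
    fun x => ⟨(List.ofFn (fun i => q (x i)) : Multiset Q), by simp⟩
  have hF : ∀ (w : WreathProduct G d) (x : Fin d → X), F (w • x) = F x := by
    intro w x
    apply Subtype.ext
    show ((List.ofFn fun i => q ((w • x) i) : Multiset Q)) = _
    have hfun : (fun i => q ((w • x) i))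
        = (fun i => q (x i)) ∘ (w.right⁻¹ : Equiv.Perm (Fin d)) := by
      funext i
      show q (w.left i • x (w.right⁻¹ i)) = q (x (w.right⁻¹ i))
      exact Quotient.sound ⟨w.left i, rfl⟩
    rw [hfun]
    exact Multiset.coe_eq_coe.mpr (Equiv.Perm.ofFn_comp_perm _ _)
  refine ⟨Equiv.ofBijective (Quotient.lift F (fun a b h => ?_)) ⟨?_, ?_⟩⟩
  · have h' : a ∈ MulAction.orbit (WreathProduct G d) b := h
    obtain ⟨w, hw⟩ := h'
    rw [← hw]
    exact hF w b
  · intro x' y'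
    refine Quotient.inductionOn₂ x' y' (fun x y hxy => ?_)
    simp only [Quotient.lift_mk] at hxy
    have hperm : (List.ofFn fun i => q (x i)).Perm (List.ofFn fun i => q (y i)) :=
      Multiset.coe_eq_coe.mp (congrArg Subtype.val hxy)
    obtain ⟨σ, hσ⟩ := ofFn_perm_exists hperm
    have hpt : ∀ i, q (x (σ i)) = q (y i) := fun i => congrFun hσ i
    have hg : ∀ i, ∃ g : G, g • x (σ i) = y i := by
      intro i
      have h2 : x (σ i) ∈ MulAction.orbit G (y i) := Quotient.exact (hpt i)
      obtain ⟨g, hgi⟩ := h2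
      exact ⟨g⁻¹, by rw [← hgi, inv_smul_smul]⟩
    choose g hgspec using hg
    have hw : (⟨g, σ⁻¹⟩ : WreathProduct G d) • x = y := by
      funext i
      show g i • x (σ⁻¹⁻¹ i) = y i
      rw [inv_inv]
      exact hgspec i
    have hrel : y ∈ MulAction.orbit (WreathProduct G d) x := ⟨⟨g, σ⁻¹⟩, hw⟩
    exact (Quotient.sound hrel).symm
  · intro s
    set m : Multiset X := s.1.map Quotient.out with hm
    have hcard : m.toList.length = d := by
      rw [Multiset.length_toList, hm, Multiset.card_map, s.2]
    refine ⟨Quotient.mk _ (fun i : Fin d => m.toList.get (Fin.cast hcard.symm i)), ?_⟩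
    simp only [Quotient.lift_mk]
    apply Subtype.ext
    show ((List.ofFn fun i => q (m.toList.get (Fin.cast hcard.symm i)) : Multiset Q)) = s.1
    have h1 : (List.ofFn fun i => q (m.toList.get (Fin.cast hcard.symm i)))
        = List.map q m.toList := by
      have := ofFn_get_cast hcard
      calc (List.ofFn fun i => q (m.toList.get (Fin.cast hcard.symm i)))
          = List.map q (List.ofFn fun i => m.toList.get (Fin.cast hcard.symm i)) := by
            rw [List.map_ofFn]; rfl
        _ = List.map q m.toList := by rw [this]
    rw [h1]
    show ((m.toList.map q : List Q) : Multiset Q) = s.1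
    rw [← Multiset.map_coe, Multiset.coe_toList, hm, Multiset.map_map]
    simp [q, Function.comp, Quotient.out_eq]
end

section
/- Let E be an additive abelian group, Q an additive subgroup of E, and d a natural number. Let A = {x : Fin (d+1) → E | ∑ i, x i = 0} and A_Q = {x : Fin (d+1) → E | ∑ i, x i = 0 and x i ∈ Q for all i}. Consider the action on A of the group generated by the translations by elements of A_Q and by the coordinate permutations from Equiv.Perm (Fin (d+1)) (equivalently, of the semidirect product A_Q ⋊ Equiv.Perm (Fin (d+1))). Then the orbit space of this action is in bijection with {s : Sym (d+1) (E ⧸ Q) | the sum of s equals 0}, the bijection being induced by reducing each coordinate modulo Q and taking the underlying multiset. -/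
/-- The subgroup of `Fin n → E` consisting of tuples whose coordinates sum to zero. -/
def sumZeroSubgroup (E : Type*) [AddCommGroup E] (n : ℕ) : AddSubgroup (Fin n → E) where
  carrier := {x | ∑ i, x i = 0}
  add_mem' {x y} hx hy := by
    simp only [Set.mem_setOf_eq, Pi.add_apply, Finset.sum_add_distrib] at *
    rw [hx, hy, add_zero]
  zero_mem' := by simp
  neg_mem' {x} hx := by
    simp only [Set.mem_setOf_eq, Pi.neg_apply, Finset.sum_neg_distrib] at *
    rw [hx, neg_zero]

/-- The coordinate permutation `τ` as a bijection of the sum-zero subgroup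
`A = {x : Fin n → E | ∑ i, x i = 0}`. -/
def permOnSumZero (E : Type*) [AddCommGroup E] (n : ℕ) (τ : Equiv.Perm (Fin n)) :
    Equiv.Perm (sumZeroSubgroup E n) where
  toFun x := ⟨fun i => x.1 (τ⁻¹ i), by
    change ∑ i, x.1 (τ⁻¹ i) = 0
    simpa using (Equiv.sum_comp τ⁻¹ x.1).trans x.2⟩
  invFun x := ⟨fun i => x.1 (τ i), by
    change ∑ i, x.1 (τ i) = 0
    simpa using (Equiv.sum_comp τ x.1).trans x.2⟩
  left_inv x := by apply Subtype.ext; funext i; simp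
  right_inv x := by apply Subtype.ext; funext i; simp

/-- The group of bijections of `A = {x : Fin (d+1) → E | ∑ i, x i = 0}` generated by the
translations by elements of `A_Q = {x ∈ A | ∀ i, x i ∈ Q}` together with the coordinate
permutations; this is (isomorphic to) the semidirect product `A_Q ⋊ Equiv.Perm (Fin (d+1))`. -/
def sumZeroModGroup (E : Type*) [AddCommGroup E] (Q : AddSubgroup E) (d : ℕ) :
    Subgroup (Equiv.Perm (sumZeroSubgroup E (d + 1))) :=
  Subgroup.closure
    ((fun q : sumZeroSubgroup E (d + 1) => Equiv.addRight q) ''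
        {q : sumZeroSubgroup E (d + 1) | ∀ i, (q : Fin (d + 1) → E) i ∈ Q} ∪
      Set.range (permOnSumZero E (d + 1)))


open Equiv in
lemma exists_perm_of_ofFn_perm {α : Type*} :
    ∀ {n : ℕ} {f g : Fin n → α}, (List.ofFn f).Perm (List.ofFn g) →
      ∃ σ : Equiv.Perm (Fin n), f = g ∘ σ := by
  intro n
  induction n with
  | zero => exact fun _ => ⟨1, funext fun i => i.elim0⟩
  | succ n ih =>
    intro f g h
    have hmem : f 0 ∈ List.ofFn g := by
      rw [← h.mem_iff]; rw [List.mem_ofFn]; exact ⟨0, rfl⟩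
    obtain ⟨j, hj⟩ := (List.mem_ofFn (f := g) (a := f 0)).1 hmem
    have h2 : (List.ofFn f).Perm (List.ofFn (g ∘ Equiv.swap 0 j)) :=
      h.trans (Equiv.Perm.ofFn_comp_perm (Equiv.swap 0 j) g).symm
    rw [List.ofFn_succ, List.ofFn_succ] at h2
    have h0 : (g ∘ Equiv.swap 0 j) 0 = f 0 := by
      simp [Equiv.swap_apply_left, hj]
    rw [h0] at h2
    obtain ⟨σ', hσ'⟩ := ih h2.cons_inv
    refine ⟨Equiv.Perm.decomposeFin.symm (j, σ'), funext fun i => ?_⟩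
    refine Fin.cases ?_ (fun k => ?_) i
    · simp [hj.symm]
    · have := congrFun hσ' k
      simp only [Function.comp_apply] at this ⊢
      rw [Equiv.Perm.decomposeFin_symm_apply_succ]
      simpa using this

section Main

variable {E : Type*} [AddCommGroup E] (Q : AddSubgroup E) (d : ℕ)

/-- The coordinate-wise reduction mod `Q` as a multiset. -/
def redMultiset (x : sumZeroSubgroup E (d + 1)) : Multiset (E ⧸ Q) :=
  (List.ofFn fun i => ((x : Fin (d + 1) → E) i : E ⧸ Q) : List (E ⧸ Q))

lemma mk_sum {n : ℕ} (f : Fin n → E) :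
    ((∑ i, f i : E) : E ⧸ Q) = ∑ i, ((f i : E) : E ⧸ Q) := by
  simpa using map_sum (QuotientAddGroup.mk' Q) f Finset.univ

lemma redMultiset_sum (x : sumZeroSubgroup E (d + 1)) : (redMultiset Q d x).sum = 0 := by
  have h1 : (redMultiset Q d x).sum = ∑ i, ((x : Fin (d + 1) → E) i : E ⧸ Q) := by
    simp [redMultiset, Multiset.sum_coe, List.sum_ofFn, Fin.sum_univ_succ]
  have hx : ∑ i, (x : Fin (d + 1) → E) i = 0 := x.2
  rw [h1, ← mk_sum, hx]
  rfl

lemma redMultiset_card (x : sumZeroSubgroup E (d + 1)) :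
    Multiset.card (redMultiset Q d x) = d + 1 := by
  simp [redMultiset]

/-- The descent of reduction mod Q to Sym. -/
def redF (x : sumZeroSubgroup E (d + 1)) :
    {s : Sym (E ⧸ Q) (d + 1) // (s : Multiset (E ⧸ Q)).sum = 0} :=
  ⟨⟨redMultiset Q d x, redMultiset_card Q d x⟩, redMultiset_sum Q d x⟩

lemma redF_invariant (g : Equiv.Perm (sumZeroSubgroup E (d + 1)))
    (hg : g ∈ sumZeroModGroup E Q d) (x : sumZeroSubgroup E (d + 1)) :
    redF Q d (g x) = redF Q d x := by
  revert x
  induction hg using Subgroup.closure_induction with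
  | mem g hgen =>
    intro x
    apply Subtype.ext; apply Subtype.ext
    rcases hgen with ⟨q, hq, rfl⟩ | ⟨τ, rfl⟩
    · show redMultiset Q d (x + q) = redMultiset Q d x
      unfold redMultiset
      congr 1
      refine congrArg List.ofFn (funext fun i => ?_)
      show (((x : Fin (d+1) → E) i + (q : Fin (d+1) → E) i : E) : E ⧸ Q) = _
      rw [QuotientAddGroup.mk_add, (QuotientAddGroup.eq_zero_iff _).2 (hq i), add_zero]
    · show redMultiset Q d (permOnSumZero E (d+1) τ x) = redMultiset Q d x
      unfold redMultiset
      exact Multiset.coe_eq_coe.2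
        (Equiv.Perm.ofFn_comp_perm τ⁻¹ fun i => ((x : Fin (d+1) → E) i : E ⧸ Q))
  | one => intro x; rfl
  | mul a b _ _ iha ihb =>
    intro x
    show redF Q d (a (b x)) = _
    rw [iha, ihb]
  | inv a _ iha =>
    intro x
    have := iha (a⁻¹ x)
    rw [← Equiv.Perm.mul_apply, mul_inv_cancel, Equiv.Perm.one_apply] at this
    exact this.symm

lemma redF_injective_orbit {x y : sumZeroSubgroup E (d + 1)}
    (h : redF Q d x = redF Q d y) :
    ∃ g : sumZeroModGroup E Q d, g • x = y := by
  classical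
  have hM : redMultiset Q d x = redMultiset Q d y := congrArg (fun s => (s.1 : Multiset (E ⧸ Q))) h
  have hperm := Multiset.coe_eq_coe.1 hM
  obtain ⟨σ, hσ⟩ := exists_perm_of_ofFn_perm hperm
  -- hσ : (fun i => ⟦x i⟧) = (fun i => ⟦y i⟧) ∘ σ
  set z : sumZeroSubgroup E (d + 1) := permOnSumZero E (d + 1) σ x with hz
  have hzc : ∀ i, (z : Fin (d+1) → E) i = (x : Fin (d+1) → E) (σ⁻¹ i) := fun i => rfl
  have hq : ∀ i, ((y - z : sumZeroSubgroup E (d+1)) : Fin (d+1) → E) i ∈ Q := by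
    intro i
    have h1 : (((x : Fin (d+1) → E) (σ⁻¹ i) : E) : E ⧸ Q) = ((y : Fin (d+1) → E) i : E ⧸ Q) := by
      have := congrFun hσ (σ⁻¹ i)
      simpa using this
    have h2 : ((y : Fin (d+1) → E) i : E) - (x : Fin (d+1) → E) (σ⁻¹ i) ∈ Q :=
      (QuotientAddGroup.eq_iff_sub_mem).1 h1.symm
    simpa [hzc] using h2
  refine ⟨⟨Equiv.addRight (y - z) * permOnSumZero E (d + 1) σ, ?_⟩, ?_⟩
  · exact mul_mem
      (Subgroup.subset_closure (Or.inl ⟨y - z, hq, rfl⟩))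
      (Subgroup.subset_closure (Or.inr ⟨σ, rfl⟩))
  · show (Equiv.addRight (y - z) * permOnSumZero E (d + 1) σ) x = y
    show permOnSumZero E (d + 1) σ x + (y - z) = y
    rw [← hz]
    abel

lemma redF_surjective : Function.Surjective (redF Q d) := by
  classical
  rintro ⟨s, hs⟩
  set m : Multiset (E ⧸ Q) := (s : Multiset (E ⧸ Q)) with hm
  set l := m.toList with hl
  have hlen : l.length = d + 1 := by
    rw [hl, Multiset.length_toList]
    exact s.2
  set f : Fin (d + 1) → E ⧸ Q := fun i => l.get (Fin.cast hlen.symm i) with hf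
  have hofn : List.ofFn f = l :=
    (List.ofFn_congr hlen l.get).symm.trans (List.ofFn_get l)
  set x' : Fin (d + 1) → E := fun i => (f i).out with hx'
  have hx'c : ∀ i, ((x' i : E) : E ⧸ Q) = f i := fun i => Quotient.out_eq _
  set t : E := ∑ i, x' i with ht
  have htQ : t ∈ Q := by
    rw [← QuotientAddGroup.eq_zero_iff]
    have hmk : ((t : E) : E ⧸ Q) = ∑ i, ((x' i : E) : E ⧸ Q) := by
      rw [ht]; exact mk_sum Q _
    have h1 : ∑ i, ((x' i : E) : E ⧸ Q) = ∑ i, f i :=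
      Finset.sum_congr rfl fun i _ => hx'c i
    have h2 : (∑ i, f i) = (List.ofFn f).sum := List.sum_ofFn.symm
    have h3 : l.sum = m.sum := by rw [hl]; exact Multiset.sum_toList m
    rw [hmk, h1, h2, hofn, h3, hs]
  set x : Fin (d + 1) → E := fun i => x' i - if i = 0 then t else 0 with hx
  have hxsum : ∑ i, x i = 0 := by
    rw [hx]
    rw [Finset.sum_sub_distrib]
    rw [Finset.sum_ite_eq' Finset.univ (0 : Fin (d+1)) (fun _ => t)]
    simp [← ht]
  have hxc : ∀ i, ((x i : E) : E ⧸ Q) = f i := by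
    intro i
    rw [hx]
    by_cases h0 : i = 0
    · subst h0
      show ((x' 0 - if (0 : Fin (d + 1)) = 0 then t else 0 : E) : E ⧸ Q) = f 0
      rw [if_pos rfl, QuotientAddGroup.mk_sub, (QuotientAddGroup.eq_zero_iff _).2 htQ, sub_zero]
      exact hx'c _
    · show ((x' i - if i = 0 then t else 0 : E) : E ⧸ Q) = f i
      rw [if_neg h0, sub_zero]
      exact hx'c _
  refine ⟨⟨x, hxsum⟩, ?_⟩
  apply Subtype.ext; apply Subtype.ext
  show redMultiset Q d ⟨x, hxsum⟩ = m
  unfold redMultiset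
  have : (List.ofFn fun i => ((x i : E) : E ⧸ Q)) = List.ofFn f :=
    congrArg List.ofFn (funext hxc)
  rw [this, hofn, hl]
  simp

end Main


/-- The orbit space of the action on `A = {x : Fin (d+1) → E | ∑ i, x i = 0}` of the group
generated by translations by elements of `A_Q` and coordinate permutations (equivalently, of
`A_Q ⋊ Equiv.Perm (Fin (d+1))`) is in bijection with the multisets of cardinality `d+1` over
`E ⧸ Q` whose sum is zero, the bijection being induced by reducing each coordinate modulo `Q`
and taking the underlying multiset. -/
theorem orbitSpace_sumZeroModGroup_equiv_sym (E : Type*) [AddCommGroup E] (Q : AddSubgroup E)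
    (d : ℕ) :
    ∃ e : Quotient (MulAction.orbitRel (sumZeroModGroup E Q d) (sumZeroSubgroup E (d + 1))) ≃
        {s : Sym (E ⧸ Q) (d + 1) // (s : Multiset (E ⧸ Q)).sum = 0},
      ∀ x : sumZeroSubgroup E (d + 1),
        ((e (Quotient.mk (MulAction.orbitRel (sumZeroModGroup E Q d) (sumZeroSubgroup E (d + 1)))
              x) : Sym (E ⧸ Q) (d + 1)) : Multiset (E ⧸ Q)) =
          ((List.ofFn fun i => ((x : Fin (d + 1) → E) i : E ⧸ Q)) : Multiset (E ⧸ Q)) := by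
  classical
  have hlift : ∀ a b : sumZeroSubgroup E (d + 1),
      (MulAction.orbitRel (sumZeroModGroup E Q d) (sumZeroSubgroup E (d + 1))).r a b →
        redF Q d a = redF Q d b := by
    intro a b hab
    obtain ⟨g, hg⟩ := hab
    rw [← hg]
    exact redF_invariant Q d (g : Equiv.Perm _) g.2 b
  let e₀ : Quotient (MulAction.orbitRel (sumZeroModGroup E Q d) (sumZeroSubgroup E (d + 1))) →
      {s : Sym (E ⧸ Q) (d + 1) // (s : Multiset (E ⧸ Q)).sum = 0} :=
    Quotient.lift (redF Q d) hlift
  have hbij : Function.Bijective e₀ := by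
    constructor
    · intro a b
      induction a using Quotient.ind
      induction b using Quotient.ind
      intro h
      obtain ⟨g, hg⟩ := redF_injective_orbit Q d (h : redF Q d _ = redF Q d _)
      exact Quotient.sound ⟨g⁻¹, by rw [← hg]; simp⟩
    · intro s
      obtain ⟨x, hx⟩ := redF_surjective Q d s
      exact ⟨Quotient.mk _ x, hx⟩
  exact ⟨Equiv.ofBijective e₀ hbij, fun x => rfl⟩
end
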